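/- Let N ≥ 2, 0 < p < 1, 0 < q < p with 1 - 2p + q > 0, and let P be the Dandelion probability function on {0,1}^{N+1} with parameters α = log((p-q)/(1-2p+q)), α₀ = (N-1)·log((1-p)/p) + N·α, β = log(q/(p-q)) - α, Z = (1+exp α)^N + exp(α₀)·(1+exp(α+β))^N. Then for any two distinct non-central indices i, j ∈ {1,…,N}, the joint moment E[LᵢLⱼ] = Σ_{(l₀,…,l_N): lᵢ=1, lⱼ=1} P(l₀,…,l_N) equals (p-q)²/(1-p) + q²/p. -/

import Mathlib

/-- The real value of a Bernoulli (default) indicator. -/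
noncomputable def ind (b : Bool) : ℝ := if b then 1 else 0

lemma key2 {n : ℕ} (i j : Fin n) (hij : i ≠ j) (a : ℝ) :
    ∑ f : Fin n → Bool, ind (f i) * ind (f j) * Real.exp (a * ∑ k, ind (f k))
      = Real.exp a ^ 2 * (1 + Real.exp a) ^ (n - 2) := by
  have h1 : ∀ f : Fin n → Bool, ind (f i) * ind (f j) * Real.exp (a * ∑ k, ind (f k))
      = ∏ k, ((if k ∈ ({i, j} : Finset (Fin n)) then ind (f k) else 1)
          * Real.exp (a * ind (f k))) := by
    intro f
    rw [Finset.prod_mul_distrib, Finset.prod_ite_mem, Finset.univ_inter,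
      Finset.prod_pair hij, Finset.mul_sum, Real.exp_sum]
  simp_rw [h1]
  rw [← Fintype.piFinset_univ,
    ← Finset.prod_univ_sum (fun _ : Fin n => (Finset.univ : Finset Bool))
      (fun k b => (if k ∈ ({i, j} : Finset (Fin n)) then ind b else 1)
        * Real.exp (a * ind b))]
  have h2 : ∀ k : Fin n,
      (∑ b : Bool, (if k ∈ ({i, j} : Finset (Fin n)) then ind b else 1)
        * Real.exp (a * ind b))
      = if k ∈ ({i, j} : Finset (Fin n)) then Real.exp a else 1 + Real.exp a := by
    intro k
    by_cases hk : k ∈ ({i, j} : Finset (Fin n)) <;>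
      simp [hk, ind, Fintype.sum_bool, add_comm]
  simp_rw [h2]
  rw [Finset.prod_ite, Finset.prod_const, Finset.prod_const]
  congr 1
  · congr 1
    rw [Finset.filter_mem_eq_inter, Finset.univ_inter, Finset.card_pair hij]
  · congr 1
    rw [Finset.filter_not, Finset.filter_mem_eq_inter, Finset.univ_inter,
      Finset.card_sdiff_of_subset (Finset.subset_univ _), Finset.card_univ, Fintype.card_fin,
      Finset.card_pair hij]

/-- In the Dandelion model with parameters `α = log((p-q)/(1-2p+q))`,
`α₀ = (N-1)log((1-p)/p) + Nα`, `β = log(q/(p-q)) - α` and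
`Z = (1+e^α)^N + e^{α₀}(1+e^{α+β})^N`, for any two distinct non-central indices
`i, j` the joint moment `E[LᵢLⱼ] = Σ_{lᵢ=1, lⱼ=1} P(l₀,…,l_N)` equals
`(p-q)²/(1-p) + q²/p`. -/
theorem dandelion_noncentral_joint_moment (N : ℕ) (hN : 2 ≤ N) (p q : ℝ)
    (hp0 : 0 < p) (hp1 : p < 1) (hq0 : 0 < q) (hqp : q < p)
    (hpos : 1 - 2 * p + q > 0)
    (α α₀ β Z : ℝ)
    (hα : α = Real.log ((p - q) / (1 - 2 * p + q)))
    (hα₀ : α₀ = (N - 1 : ℝ) * Real.log ((1 - p) / p) + N * α)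
    (hβ : β = Real.log (q / (p - q)) - α)
    (hZ : Z = (1 + Real.exp α) ^ N + Real.exp α₀ * (1 + Real.exp (α + β)) ^ N)
    (i j : Fin N) (hij : i ≠ j) :
    (∑ l ∈ Finset.univ.filter
        (fun l : Fin (N + 1) → Bool => l i.succ = true ∧ l j.succ = true),
        (1 / Z) * Real.exp (α₀ * ind (l 0) + α * (∑ k : Fin N, ind (l k.succ))
          + β * ind (l 0) * (∑ k : Fin N, ind (l k.succ)))) =
      (p - q) ^ 2 / (1 - p) + q ^ 2 / p := by
  set T : (Fin (N+1) → Bool) → ℝ := fun l =>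
    (1 / Z) * Real.exp (α₀ * ind (l 0) + α * (∑ k : Fin N, ind (l k.succ))
      + β * ind (l 0) * (∑ k : Fin N, ind (l k.succ))) with hT
  rw [Finset.sum_filter]
  have hterm : ∀ l : Fin (N+1) → Bool,
      (if l i.succ = true ∧ l j.succ = true then T l else 0)
        = ind (l i.succ) * ind (l j.succ) * T l := by
    intro l
    rcases hbi : l i.succ <;> rcases hbj : l j.succ <;> simp [ind, hbi, hbj]
  change (∑ l : Fin (N+1) → Bool, if l i.succ = true ∧ l j.succ = true then T l else 0) = _
  simp_rw [hterm]
  have hsplit : ∑ l : Fin (N+1) → Bool, ind (l i.succ) * ind (l j.succ) * T l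
      = ∑ x : Bool × (Fin N → Bool),
          ind (x.2 i) * ind (x.2 j) * T (Fin.cons x.1 x.2) := by
    refine Fintype.sum_equiv (Fin.consEquiv (fun _ => Bool)).symm _ _ (fun l => ?_)
    simp [Fin.consEquiv, Fin.tail]
  rw [hsplit, Fintype.sum_prod_type, Fintype.sum_bool]
  have hc0 : ∀ f : Fin N → Bool, (Fin.cons false f : Fin (N+1) → Bool) 0 = false :=
    fun f => Fin.cons_zero _ _
  have hsum1 : (∑ f : Fin N → Bool, ind (f i) * ind (f j) * T (Fin.cons true f))
      = (1 / Z) * Real.exp α₀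
        * (Real.exp (α + β) ^ 2 * (1 + Real.exp (α + β)) ^ (N - 2)) := by
    have : ∀ f : Fin N → Bool, T (Fin.cons true f)
        = ((1 / Z) * Real.exp α₀) * Real.exp ((α + β) * ∑ k, ind (f k)) := by
      intro f
      simp only [hT, Fin.cons_zero, Fin.cons_succ, ind, if_true]
      rw [mul_assoc (1/Z), ← Real.exp_add]
      congr 2
      ring
    simp_rw [this]
    rw [show ∀ g : (Fin N → Bool) → ℝ, (∑ f : Fin N → Bool,
        ind (f i) * ind (f j) * (((1 / Z) * Real.exp α₀) * g f))
      = ((1 / Z) * Real.exp α₀) * ∑ f : Fin N → Bool, ind (f i) * ind (f j) * g f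
      from fun g => by rw [Finset.mul_sum]; exact Finset.sum_congr rfl (fun f _ => by ring)]
    rw [key2 i j hij]
  have hsum0 : (∑ f : Fin N → Bool, ind (f i) * ind (f j) * T (Fin.cons false f))
      = (1 / Z) * (Real.exp α ^ 2 * (1 + Real.exp α) ^ (N - 2)) := by
    have : ∀ f : Fin N → Bool, T (Fin.cons false f)
        = (1 / Z) * Real.exp (α * ∑ k, ind (f k)) := by
      intro f
      simp only [hT, Fin.cons_zero, Fin.cons_succ, ind, Bool.false_eq_true, if_false,
        mul_zero, zero_mul, add_zero, zero_add, mul_one]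
    simp_rw [this]
    rw [show ∀ g : (Fin N → Bool) → ℝ, (∑ f : Fin N → Bool,
        ind (f i) * ind (f j) * ((1 / Z) * g f))
      = (1 / Z) * ∑ f : Fin N → Bool, ind (f i) * ind (f j) * g f
      from fun g => by rw [Finset.mul_sum]; exact Finset.sum_congr rfl (fun f _ => by ring)]
    rw [key2 i j hij]
  rw [hsum0, hsum1]
  have hpq : 0 < p - q := by linarith
  have h1p : 0 < 1 - p := by linarith
  have hx : Real.exp α = (p - q) / (1 - 2 * p + q) := by
    rw [hα, Real.exp_log (by positivity)]
  have hy : Real.exp (α + β) = q / (p - q) := by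
    rw [hβ, show α + (Real.log (q / (p - q)) - α) = Real.log (q / (p - q)) by ring,
      Real.exp_log (by positivity)]
  have hE0 : Real.exp α₀ = ((1 - p) / p) ^ (N - 1) * ((p - q) / (1 - 2 * p + q)) ^ N := by
    rw [hα₀, Real.exp_add, ← Nat.cast_pred (by omega), Real.exp_nat_mul,
      Real.exp_nat_mul, Real.exp_log (by positivity), hx]
  obtain ⟨M, rfl⟩ : ∃ M, N = M + 2 := ⟨N - 2, by omega⟩
  simp only [Nat.add_sub_cancel] at hsum0 hsum1
  rw [show M + 2 - 1 = M + 1 from rfl] at hE0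
  have hZval : Z = (1 - p) ^ (M + 1) / (1 - 2 * p + q) ^ (M + 2) := by
    rw [hZ, hx, hy, hE0]
    have h1 : 1 + (p - q) / (1 - 2 * p + q) = (1 - p) / (1 - 2 * p + q) := by
      rw [eq_div_iff (ne_of_gt hpos), add_mul, div_mul_cancel₀ _ (ne_of_gt hpos)]
      ring
    have h2 : 1 + q / (p - q) = p / (p - q) := by
      rw [eq_div_iff (ne_of_gt hpq), add_mul, div_mul_cancel₀ _ (ne_of_gt hpq)]
      ring
    rw [h1, h2]
    rw [div_pow, div_pow, div_pow, div_pow]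
    have hne1 : (1 - p) ≠ 0 := ne_of_gt h1p
    have hne2 : (1 - 2 * p + q) ≠ 0 := ne_of_gt hpos
    have hne3 : (p - q) ≠ 0 := ne_of_gt hpq
    have hne4 : p ≠ 0 := ne_of_gt hp0
    field_simp
    congr 1
    rw [pow_succ (1 - p) (M + 1), pow_succ p (M + 1)]
    ring
  rw [hZval, hx, hy, hE0]
  have h1 : 1 + (p - q) / (1 - 2 * p + q) = (1 - p) / (1 - 2 * p + q) := by
    rw [eq_div_iff (ne_of_gt hpos), add_mul, div_mul_cancel₀ _ (ne_of_gt hpos)]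
    ring
  have h2 : 1 + q / (p - q) = p / (p - q) := by
    rw [eq_div_iff (ne_of_gt hpq), add_mul, div_mul_cancel₀ _ (ne_of_gt hpq)]
    ring
  rw [h1, h2, div_pow, div_pow, div_pow, div_pow, div_pow, div_pow]
  have hne1 : (1 - p) ≠ 0 := ne_of_gt h1p
  have hne2 : (1 - 2 * p + q) ≠ 0 := ne_of_gt hpos
  have hne3 : (p - q) ≠ 0 := ne_of_gt hpq
  have hne4 : p ≠ 0 := ne_of_gt hp0
  have hne5 : q ≠ 0 := ne_of_gt hq0
  simp only [Nat.add_sub_cancel]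
  have hne2' : (1 - p * 2 + q) ≠ 0 := by rw [mul_comm]; exact hne2
  field_simp
  ring
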